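/- (Rate bound, Eq. (F)) Let t ↦ ρ_t be a differentiable family of nonzero Hermitian positive semidefinite d×d matrices satisfying ρ̇_t = 𝓛_t(ρ_t) for continuous linear maps 𝓛_t on the matrix space with the Hilbert–Schmidt inner product, and let ρ̃_t := ρ_t / ‖ρ_t‖_HS be the normalized states. Then for every t, | d/dt ( tr(ρ̃_0 ρ̃_t) )² | ≤ 2 Δ𝓛_t, where (Δ𝓛_t)² := ‖𝓛_t ρ̃_t‖²_HS − |⟨ρ̃_t, 𝓛_t ρ̃_t⟩|². -/

import Mathlib

open Matrix
open scoped ComplexOrder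

noncomputable section

/-- A density matrix: Hermitian, positive semidefinite, trace one. -/
def IsDensityMatrix {d : ℕ} (ρ : Matrix (Fin d) (Fin d) ℂ) : Prop :=
  ρ.IsHermitian ∧ ρ.PosSemidef ∧ ρ.trace = 1

/-- The real part `(ρ + ρᵀ)/2` of a matrix. -/
def reM {d : ℕ} (ρ : Matrix (Fin d) (Fin d) ℂ) : Matrix (Fin d) (Fin d) ℂ :=
  (2⁻¹ : ℂ) • (ρ + ρᵀ)

/-- The imaginary part `(ρ - ρᵀ)/(2i)` of a matrix. -/
def imM {d : ℕ} (ρ : Matrix (Fin d) (Fin d) ℂ) : Matrix (Fin d) (Fin d) ℂ :=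
  (2 * Complex.I)⁻¹ • (ρ - ρᵀ)

/-- The Hilbert–Schmidt norm `√(tr (Aᴴ A))`. -/
def hsNorm {d : ℕ} (A : Matrix (Fin d) (Fin d) ℂ) : ℝ :=
  Real.sqrt ((Aᴴ * A).trace.re)

/-- The old Mathlib `Matrix.PosSemidef.sqrt` (removed upstream), with its original definition. -/
def Matrix.PosSemidef.sqrt {d : ℕ} {A : Matrix (Fin d) (Fin d) ℂ} (hA : A.PosSemidef) :
    Matrix (Fin d) (Fin d) ℂ :=
  (hA.1.eigenvectorUnitary : Matrix (Fin d) (Fin d) ℂ) *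
    diagonal ((↑) ∘ (Real.sqrt ·) ∘ hA.1.eigenvalues) *
    (star hA.1.eigenvectorUnitary : Matrix (Fin d) (Fin d) ℂ)

/-- The trace norm `tr √(Aᴴ A)`. -/
def traceNorm {d : ℕ} (A : Matrix (Fin d) (Fin d) ℂ) : ℝ :=
  ((Matrix.posSemidef_conjTranspose_mul_self A).sqrt.trace).re

/-- Matrix logarithm via the continuous functional calculus (on Hermitian matrices). -/
def matLog {d : ℕ} (A : Matrix (Fin d) (Fin d) ℂ) : Matrix (Fin d) (Fin d) ℂ :=
  cfc Real.log A

open scoped Classical in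
/-- The positive semidefinite square root of a positive semidefinite matrix
(junk value `0` otherwise). -/
def msqrt {d : ℕ} (A : Matrix (Fin d) (Fin d) ℂ) : Matrix (Fin d) (Fin d) ℂ :=
  if h : A.PosSemidef then h.sqrt else 0

/-- The von Neumann entropy `S(ρ) = -tr(ρ log ρ)`. -/
def vnEntropy {d : ℕ} (ρ : Matrix (Fin d) (Fin d) ℂ) : ℝ :=
  -((ρ * matLog ρ).trace.re)

/-- The relative entropy of imaginarity `M_r(ρ) = S(Re ρ) - S(ρ)`. -/
def Mr {d : ℕ} (ρ : Matrix (Fin d) (Fin d) ℂ) : ℝ :=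
  vnEntropy (reM ρ) - vnEntropy ρ

/-- The root fidelity `tr √(√ρ σ √ρ)`. -/
def rootFid {d : ℕ} (ρ σ : Matrix (Fin d) (Fin d) ℂ) : ℝ :=
  ((msqrt (msqrt ρ * σ * msqrt ρ)).trace).re

/-- The geometric imaginarity `M_g(ρ) = (1 - √F(ρ, ρᵀ))/2`. -/
def Mg {d : ℕ} (ρ : Matrix (Fin d) (Fin d) ℂ) : ℝ :=
  (1 - rootFid ρ ρᵀ) / 2

/-- The Hilbert–Schmidt inner product `⟨A, B⟩ = tr(Aᴴ B)`. -/
def hsInner {d : ℕ} (A B : Matrix (Fin d) (Fin d) ℂ) : ℂ :=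
  (Aᴴ * B).trace

/-- The operator norm of a map on matrices induced by the Hilbert–Schmidt norm. -/
def opNormHS {d : ℕ} (L : Matrix (Fin d) (Fin d) ℂ → Matrix (Fin d) (Fin d) ℂ) : ℝ :=
  sSup {x : ℝ | ∃ ψ, hsNorm ψ = 1 ∧ x = hsNorm (L ψ)}

/-- The Liouville-space normalized vector `ρ̃ = ρ / ‖ρ‖_HS`. -/
def hsNormalize {d : ℕ} (A : Matrix (Fin d) (Fin d) ℂ) : Matrix (Fin d) (Fin d) ℂ :=
  ((hsNorm A : ℂ))⁻¹ • A

/-- The fluctuation `Δ𝓛 = √(‖𝓛ψ‖² - |⟨ψ, 𝓛ψ⟩|²)` of a superoperator at a unit vector. -/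
def fluct {d : ℕ} (L : Matrix (Fin d) (Fin d) ℂ → Matrix (Fin d) (Fin d) ℂ)
    (ψ : Matrix (Fin d) (Fin d) ℂ) : ℝ :=
  Real.sqrt ((hsNorm (L ψ)) ^ 2 - ‖hsInner ψ (L ψ)‖ ^ 2)


def toE' {d : ℕ} (A : Matrix (Fin d) (Fin d) ℂ) : EuclideanSpace ℂ (Fin d × Fin d) :=
  WithLp.toLp 2 (fun p : Fin d × Fin d => A p.1 p.2)

lemma inner_toE' {d : ℕ} (A B : Matrix (Fin d) (Fin d) ℂ) :
    (inner ℂ (toE' A) (toE' B) : ℂ) = (Aᴴ * B).trace := by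
  simp only [PiLp.inner_apply, toE', PiLp.toLp_apply, Matrix.trace, Matrix.diag, Matrix.mul_apply,
    Matrix.conjTranspose_apply, RCLike.inner_apply', ← Finset.univ_product_univ,
    Finset.sum_product]
  rw [Finset.sum_comm]; rfl

lemma norm_toE' {d : ℕ} (A : Matrix (Fin d) (Fin d) ℂ) :
    ‖toE' A‖ = Real.sqrt ((Aᴴ * A).trace.re) := by
  rw [@norm_eq_sqrt_re_inner ℂ, inner_toE', RCLike.re_to_complex]

lemma toE'_ne_zero {d : ℕ} {A : Matrix (Fin d) (Fin d) ℂ} (h : A ≠ 0) : toE' A ≠ 0 := by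
  intro h0
  apply h
  ext i j
  have := congrArg (fun v => v (i, j)) h0
  simpa [toE'] using this

lemma toE'_smul {d : ℕ} (c : ℂ) (A : Matrix (Fin d) (Fin d) ℂ) :
    toE' (c • A) = c • toE' A := rfl

lemma toE'_sub {d : ℕ} (A B : Matrix (Fin d) (Fin d) ℂ) :
    toE' (A - B) = toE' A - toE' B := rfl

lemma hasDerivAt_trace_re' {d : ℕ} (C : Matrix (Fin d) (Fin d) ℂ)
    (ρ : ℝ → Matrix (Fin d) (Fin d) ℂ) (ρ' : Matrix (Fin d) (Fin d) ℂ) (t : ℝ)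
    (h : ∀ i j, HasDerivAt (fun s => ρ s i j) (ρ' i j) t) :
    HasDerivAt (fun s => ((C * ρ s).trace).re) ((C * ρ').trace.re) t := by
  have key : ∀ M : Matrix (Fin d) (Fin d) ℂ, ((C * M).trace).re
      = ∑ i : Fin d, ∑ j : Fin d, (C i j * M j i).re := by
    intro M
    rw [Matrix.trace, Complex.re_sum]
    congr 1; funext i
    rw [Matrix.diag, Matrix.mul_apply, Complex.re_sum]
  simp only [key]
  apply HasDerivAt.fun_sum; intro i _
  apply HasDerivAt.fun_sum; intro j _
  exact Complex.reCLM.hasFDerivAt.comp_hasDerivAt t ((h j i).const_mul (C i j))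

lemma trace_re_expand' {d : ℕ} (C M : Matrix (Fin d) (Fin d) ℂ) :
    ((Cᴴ * M).trace).re = ∑ i : Fin d, ∑ j : Fin d, (star (C j i) * M j i).re := by
  rw [Matrix.trace, Complex.re_sum]
  congr 1; funext i
  rw [Matrix.diag, Matrix.mul_apply, Complex.re_sum]
  rfl

lemma hasDerivAt_normsq' {d : ℕ}
    (ρ : ℝ → Matrix (Fin d) (Fin d) ℂ) (ρ' : Matrix (Fin d) (Fin d) ℂ) (t : ℝ)
    (h : ∀ i j, HasDerivAt (fun s => ρ s i j) (ρ' i j) t) :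
    HasDerivAt (fun s => (((ρ s)ᴴ * ρ s).trace).re) (2 * (((ρ t)ᴴ * ρ').trace).re) t := by
  have key : ∀ s, (((ρ s)ᴴ * ρ s).trace).re
      = ∑ i : Fin d, ∑ j : Fin d, (star (ρ s j i) * ρ s j i).re := fun s => trace_re_expand' _ _
  simp only [key]
  have key2 : 2 * (((ρ t)ᴴ * ρ').trace).re
      = ∑ i : Fin d, ∑ j : Fin d, (star (ρ' j i) * ρ t j i + star (ρ t j i) * ρ' j i).re := by
    rw [trace_re_expand', Finset.mul_sum]
    congr 1; funext i
    rw [Finset.mul_sum]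
    congr 1; funext j
    have : (star (ρ' j i) * ρ t j i) = star (star (ρ t j i) * ρ' j i) := by
      simp [mul_comm]
    rw [Complex.add_re, this]
    simp only [RCLike.star_def, Complex.conj_re]
    ring
  rw [key2]
  apply HasDerivAt.fun_sum; intro i _
  apply HasDerivAt.fun_sum; intro j _
  exact Complex.reCLM.hasFDerivAt.comp_hasDerivAt t (((h j i).star).mul (h j i))


lemma key_bound {E : Type*} [NormedAddCommGroup E] [InnerProductSpace ℂ E]
    (x0 x ev : E) (c D : ℝ) (hx0 : ‖x0‖ = 1) (hx : ‖x‖ = 1)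
    (hc : (inner ℂ x ev : ℂ) = (c : ℂ))
    (hD : D = 2 * (inner ℂ x0 x : ℂ).re * (inner ℂ x0 (ev - (c : ℂ) • x) : ℂ).re) :
    |D| ≤ 2 * Real.sqrt (‖ev‖ ^ 2 - c ^ 2) := by
  have hrevx : (inner ℂ ev x : ℂ) = (c : ℂ) := by
    rw [← inner_conj_symm, hc]
    simp
  have hw : ‖ev - (c : ℂ) • x‖ ^ 2 = ‖ev‖ ^ 2 - c ^ 2 := by
    rw [@norm_sub_sq ℂ, inner_smul_right, hrevx, norm_smul, hx]
    simp only [RCLike.re_to_complex]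
    rw [← Complex.ofReal_mul]
    simp [Complex.norm_real]
    ring
  have hsqrt : Real.sqrt (‖ev‖ ^ 2 - c ^ 2) = ‖ev - (c : ℂ) • x‖ := by
    rw [← hw, Real.sqrt_sq (norm_nonneg _)]
  have b1 : |(inner ℂ x0 x : ℂ).re| ≤ 1 := by
    calc |(inner ℂ x0 x : ℂ).re| ≤ ‖(inner ℂ x0 x : ℂ)‖ := Complex.abs_re_le_norm _
    _ ≤ ‖x0‖ * ‖x‖ := norm_inner_le_norm _ _
    _ = 1 := by rw [hx0, hx, mul_one]
  have b2 : |(inner ℂ x0 (ev - (c : ℂ) • x) : ℂ).re| ≤ ‖ev - (c : ℂ) • x‖ := by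
    calc |(inner ℂ x0 (ev - (c : ℂ) • x) : ℂ).re| ≤ ‖(inner ℂ x0 (ev - (c : ℂ) • x) : ℂ)‖ :=
      Complex.abs_re_le_norm _
    _ ≤ ‖x0‖ * ‖ev - (c : ℂ) • x‖ := norm_inner_le_norm _ _
    _ = ‖ev - (c : ℂ) • x‖ := by rw [hx0, one_mul]
  rw [hsqrt, hD, abs_mul, abs_mul, abs_two]
  calc 2 * |(inner ℂ x0 x : ℂ).re| * |(inner ℂ x0 (ev - (c : ℂ) • x) : ℂ).re|
      ≤ 2 * 1 * ‖ev - (c : ℂ) • x‖ := by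
        apply mul_le_mul _ b2 (abs_nonneg _) (by positivity)
        apply mul_le_mul_of_nonneg_left b1 (by norm_num)
    _ = 2 * ‖ev - (c : ℂ) • x‖ := by ring

theorem overlap_rate_bound {d : ℕ}
    (ρ ρ' : ℝ → Matrix (Fin d) (Fin d) ℂ)
    (L : ℝ → Matrix (Fin d) (Fin d) ℂ → Matrix (Fin d) (Fin d) ℂ)
    (hLlin : ∀ t, IsLinearMap ℂ (L t))
    (hne : ∀ t, ρ t ≠ 0)
    (hpsd : ∀ t, (ρ t).PosSemidef)
    (hderiv : ∀ t, ∀ i j, HasDerivAt (fun s => ρ s i j) (ρ' t i j) t)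
    (heq : ∀ t, ρ' t = L t (ρ t)) :
    ∀ t, ∀ D : ℝ,
      HasDerivAt (fun s => (((hsNormalize (ρ 0)) * (hsNormalize (ρ s))).trace.re) ^ 2) D t →
      |D| ≤ 2 * fluct (L t) (hsNormalize (ρ t)) := by
  intro t D hD
  have herm : ∀ s, (ρ s)ᴴ = ρ s := fun s => (hpsd s).1
  -- Hermiticity of the derivative
  have hermρ' : (ρ' t)ᴴ = ρ' t := by
    ext i j
    rw [Matrix.conjTranspose_apply]
    have h1 : HasDerivAt (fun s => star (ρ s j i)) (star (ρ' t j i)) t := (hderiv t j i).star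
    have h2 : (fun s => star (ρ s j i)) = fun s => ρ s i j := by
      funext s
      rw [← Matrix.conjTranspose_apply, herm s]
    rw [h2] at h1
    exact h1.unique (hderiv t i j)
  -- norms
  have hnorm : ∀ s, ‖toE' (ρ s)‖ = Real.sqrt ((((ρ s)ᴴ * ρ s).trace).re) := fun s => norm_toE' _
  have hstpos : ∀ s, 0 < Real.sqrt ((((ρ s)ᴴ * ρ s).trace).re) := by
    intro s; rw [← hnorm]; exact norm_pos_iff.mpr (toE'_ne_zero (hne s))
  have hNnonneg : ∀ s, 0 ≤ (((ρ s)ᴴ * ρ s).trace).re := by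
    intro s
    have h := inner_self_nonneg (𝕜 := ℂ) (x := toE' (ρ s))
    rwa [inner_toE', RCLike.re_to_complex] at h
  have hNpos : ∀ s, 0 < (((ρ s)ᴴ * ρ s).trace).re := by
    intro s
    nlinarith [Real.sq_sqrt (hNnonneg s), hstpos s]
  have hst2 : ∀ s, (Real.sqrt ((((ρ s)ᴴ * ρ s).trace).re)) ^ 2 = (((ρ s)ᴴ * ρ s).trace).re :=
    fun s => Real.sq_sqrt (hNnonneg s)
  -- Hermiticity of normalized states
  have hermN : ∀ s, (hsNormalize (ρ s))ᴴ = hsNormalize (ρ s) := by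
    intro s
    show (((hsNorm (ρ s) : ℂ))⁻¹ • ρ s)ᴴ = ((hsNorm (ρ s) : ℂ))⁻¹ • ρ s
    rw [Matrix.conjTranspose_smul, herm s]
    congr 1
    simp
  -- unit norms of normalized states (in Liouville space)
  have hunit : ∀ s, ‖toE' (hsNormalize (ρ s))‖ = 1 := by
    intro s
    show ‖toE' (((hsNorm (ρ s) : ℂ))⁻¹ • ρ s)‖ = 1
    rw [toE'_smul, norm_smul, hnorm]
    have : ‖((hsNorm (ρ s) : ℂ))⁻¹‖ = (Real.sqrt ((((ρ s)ᴴ * ρ s).trace).re))⁻¹ := by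
      rw [norm_inv, Complex.norm_real]
      show |Real.sqrt _|⁻¹ = _
      rw [abs_of_pos (hstpos s)]
    rw [this, inv_mul_cancel₀ (ne_of_gt (hstpos s))]
  -- abbreviations (as plain terms)
  set st : ℝ := Real.sqrt ((((ρ t)ᴴ * ρ t).trace).re) with hstdef
  set At : ℝ := ((hsNormalize (ρ 0) * ρ t).trace).re with hAtdef
  set Ad : ℝ := ((hsNormalize (ρ 0) * ρ' t).trace).re with hAddef
  set Nd : ℝ := 2 * (((ρ t)ᴴ * ρ' t).trace).re with hNddef
  -- the derivative chain
  have hA : HasDerivAt (fun s => ((hsNormalize (ρ 0) * ρ s).trace).re) Ad t :=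
    hasDerivAt_trace_re' _ ρ (ρ' t) t (hderiv t)
  have hN : HasDerivAt (fun s => (((ρ s)ᴴ * ρ s).trace).re) Nd t :=
    hasDerivAt_normsq' ρ (ρ' t) t (hderiv t)
  have hsq : HasDerivAt (fun s => Real.sqrt ((((ρ s)ᴴ * ρ s).trace).re)) (Nd / (2 * st)) t :=
    hN.sqrt (ne_of_gt (hNpos t))
  have hinv : HasDerivAt (fun s => (Real.sqrt ((((ρ s)ᴴ * ρ s).trace).re))⁻¹)
      (-(Nd / (2 * st)) / st ^ 2) t := hsq.inv (ne_of_gt (hstpos t))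
  have hprod : HasDerivAt
      (fun s => (Real.sqrt ((((ρ s)ᴴ * ρ s).trace).re))⁻¹ * ((hsNormalize (ρ 0) * ρ s).trace).re)
      (-(Nd / (2 * st)) / st ^ 2 * At + st⁻¹ * Ad) t := hinv.mul hA
  have hsq2 : HasDerivAt
      (fun s => ((Real.sqrt ((((ρ s)ᴴ * ρ s).trace).re))⁻¹
        * ((hsNormalize (ρ 0) * ρ s).trace).re) ^ 2)
      ((2 : ℕ) * (st⁻¹ * At) ^ (2 - 1) * (-(Nd / (2 * st)) / st ^ 2 * At + st⁻¹ * Ad)) t :=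
    hprod.pow 2
  -- identify the function in hD
  have hfun : (fun s => (((hsNormalize (ρ 0)) * (hsNormalize (ρ s))).trace.re) ^ 2)
      = (fun s => ((Real.sqrt ((((ρ s)ᴴ * ρ s).trace).re))⁻¹
        * ((hsNormalize (ρ 0) * ρ s).trace).re) ^ 2) := by
    funext s
    congr 1
    show ((hsNormalize (ρ 0) * (((hsNorm (ρ s) : ℂ))⁻¹ • ρ s)).trace).re = _
    rw [Matrix.mul_smul, Matrix.trace_smul, smul_eq_mul]
    show ((((Real.sqrt ((((ρ s)ᴴ * ρ s).trace).re) : ℝ) : ℂ))⁻¹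
      * (hsNormalize (ρ 0) * ρ s).trace).re = _
    rw [← Complex.ofReal_inv, Complex.re_ofReal_mul]
  rw [hfun] at hD
  have hDval : D = (2 : ℕ) * (st⁻¹ * At) ^ (2 - 1) * (-(Nd / (2 * st)) / st ^ 2 * At + st⁻¹ * Ad) :=
    hD.unique hsq2
  -- Liouville-space vectors
  have hv : L t (hsNormalize (ρ t)) = ((st : ℝ) : ℂ)⁻¹ • ρ' t := by
    show L t (((hsNorm (ρ t) : ℂ))⁻¹ • ρ t) = _
    rw [(hLlin t).map_smul, ← heq t]
    rfl
  -- the trace z = tr(ρ_t ρ'_t) is real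
  have hstar : (starRingEnd ℂ) (((ρ t)ᴴ * ρ' t).trace) = ((ρ t)ᴴ * ρ' t).trace := by
    show star (((ρ t)ᴴ * ρ' t).trace) = _
    rw [← Matrix.trace_conjTranspose, Matrix.conjTranspose_mul,
      Matrix.conjTranspose_conjTranspose, hermρ', herm t]
    exact Matrix.trace_mul_comm _ _
  have hz : (((((ρ t)ᴴ * ρ' t).trace).re : ℝ) : ℂ) = (((ρ t)ᴴ * ρ' t).trace) :=
    Complex.conj_eq_iff_re.mp hstar
  set c : ℝ := Nd / (2 * st ^ 2) with hcdef
  -- inner products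
  have hx0x : (inner ℂ (toE' (hsNormalize (ρ 0))) (toE' (hsNormalize (ρ t))) : ℂ)
      = ((st : ℝ) : ℂ)⁻¹ * (hsNormalize (ρ 0) * ρ t).trace := by
    rw [inner_toE', hermN 0]
    show (hsNormalize (ρ 0) * (((hsNorm (ρ t) : ℂ))⁻¹ • ρ t)).trace = _
    rw [Matrix.mul_smul, Matrix.trace_smul, smul_eq_mul]
    rfl
  have hx0ev : (inner ℂ (toE' (hsNormalize (ρ 0))) (toE' (L t (hsNormalize (ρ t)))) : ℂ)
      = ((st : ℝ) : ℂ)⁻¹ * (hsNormalize (ρ 0) * ρ' t).trace := by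
    rw [inner_toE', hermN 0, hv, Matrix.mul_smul, Matrix.trace_smul, smul_eq_mul]
  have hstC : ((st : ℝ) : ℂ) ≠ 0 := by
    simpa using ne_of_gt (hstpos t)
  have hc : (inner ℂ (toE' (hsNormalize (ρ t))) (toE' (L t (hsNormalize (ρ t)))) : ℂ)
      = ((c : ℝ) : ℂ) := by
    rw [inner_toE', hermN t, hv]
    show ((((hsNorm (ρ t) : ℂ))⁻¹ • ρ t) * (((st : ℝ) : ℂ)⁻¹ • ρ' t)).trace = _
    rw [Matrix.smul_mul, Matrix.mul_smul, Matrix.trace_smul, Matrix.trace_smul,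
      smul_eq_mul, smul_eq_mul]
    show ((st : ℝ) : ℂ)⁻¹ * (((st : ℝ) : ℂ)⁻¹ * (ρ t * ρ' t).trace) = _
    rw [← herm t, ← hz, hcdef, hNddef]
    push_cast
    field_simp
  -- final equation for D
  have hDeq : D = 2 * ((inner ℂ (toE' (hsNormalize (ρ 0))) (toE' (hsNormalize (ρ t))) : ℂ)).re
      * ((inner ℂ (toE' (hsNormalize (ρ 0)))
          (toE' (L t (hsNormalize (ρ t))) - ((c : ℝ) : ℂ) • toE' (hsNormalize (ρ t))) : ℂ)).re := by
    have hcterm : ((((c : ℝ)) : ℂ)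
        * (inner ℂ (toE' (hsNormalize (ρ 0))) (toE' (hsNormalize (ρ t))) : ℂ)).re
        = c * (st⁻¹ * At) := by
      rw [hx0x, ← mul_assoc, ← Complex.ofReal_inv, ← Complex.ofReal_mul,
        Complex.re_ofReal_mul, ← hAtdef]
      ring
    rw [inner_sub_right, inner_smul_right, Complex.sub_re, hcterm]
    rw [hx0ev, ← Complex.ofReal_inv, Complex.re_ofReal_mul, ← hAddef]
    rw [hx0x, ← Complex.ofReal_inv, Complex.re_ofReal_mul, ← hAtdef]
    rw [hDval, hcdef]
    have hstne : st ≠ 0 := ne_of_gt (hstpos t)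
    field_simp
    have h1 : st * st⁻¹ = 1 := mul_inv_cancel₀ hstne
    linear_combination (-(At ^ 2 * Nd * 2) + st ^ 2 * At * Ad * 4) * h1
  -- fluct identification
  have hfluct : fluct (L t) (hsNormalize (ρ t))
      = Real.sqrt (‖toE' (L t (hsNormalize (ρ t)))‖ ^ 2 - c ^ 2) := by
    unfold fluct
    rw [norm_toE']
    congr 2
    rw [show hsInner (hsNormalize (ρ t)) (L t (hsNormalize (ρ t)))
          = ((c : ℝ) : ℂ) from (inner_toE' _ _).symm.trans hc]
    rw [Complex.norm_real, Real.norm_eq_abs, sq_abs]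
  rw [hfluct]
  exact key_bound _ _ _ c D (hunit 0) (hunit t) hc hDeq
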